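/- Let f(z) = -eₙ + 2(z + eₙ)/|z + eₙ|² be the Möbius transformation mapping ℍⁿ onto 𝔹ⁿ. Then the Lipschitz constants 1/2 and 2 in the inequality (1/2)τ̃_{ℍⁿ}(x,y) ≤ τ̃_{𝔹ⁿ}(f(x), f(y)) ≤ 2τ̃_{ℍⁿ}(x,y) are sharp: (a) with x = teₙ, y = (1/t)eₙ (t > 1), f(x) = -((t-1)/(t+1))eₙ, f(y) = ((t-1)/(t+1))eₙ, and τ̃_{𝔹ⁿ}(f(x),f(y))/τ̃_{ℍⁿ}(x,y) = log(1 + √t - 1/√t)/log(1 + t - 1/t) → 1/2 as t → ∞; (b) with x = te₁ + eₙ, y = eₙ (t > 2), the ratio tends to 2 as t → ∞. -/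

import Mathlib

/-- The scale invariant Cassinian metric
`τ̃_D(x,y) = log(1 + sup_{p ∈ ∂D} |x-y|/√(|x-p||y-p|))`. -/
noncomputable def scTau {E : Type*} [NormedAddCommGroup E] (D : Set E) (x y : E) : ℝ :=
  Real.log (1 + ⨆ p : frontier D, ‖x - y‖ / Real.sqrt (‖x - (p : E)‖ * ‖y - (p : E)‖))

/-- The Möbius transformation `f(z) = -e + 2(z+e)/|z+e|²` (with `e = eₙ` it maps ℍⁿ onto 𝔹ⁿ). -/
noncomputable def mob {E : Type*} [NormedAddCommGroup E] [NormedSpace ℝ E] (e z : E) : E :=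
  -e + (2 / ‖z + e‖ ^ 2) • (z + e)

section Aux
open Filter Real Metric

lemma real_iSup_eq {ι : Sort*} (f : ι → ℝ) (M : ℝ) (h1 : ∀ i, f i ≤ M)
    (h2 : ∃ i, f i = M) : (⨆ i, f i) = M := by
  obtain ⟨i0, hi0⟩ := h2
  haveI : Nonempty ι := ⟨i0⟩
  refine le_antisymm (ciSup_le h1) ?_
  calc M = f i0 := hi0.symm
  _ ≤ ⨆ i, f i := le_ciSup ⟨M, by rintro _ ⟨i, rfl⟩; exact h1 i⟩ i0


lemma log_ratio_tendsto {u : ℝ → ℝ} {p A : ℝ} (hp : 0 < p) (hA : 0 < A)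
    (h : Tendsto (fun t => u t / t ^ p) atTop (nhds A)) :
    Tendsto (fun t => Real.log (1 + u t) / Real.log t) atTop (nhds p) := by
  have hrp : Tendsto (fun t : ℝ => t ^ p) atTop atTop := tendsto_rpow_atTop hp
  have hinv : Tendsto (fun t : ℝ => (t ^ p)⁻¹) atTop (nhds 0) := hrp.inv_tendsto_atTop
  have h1 : Tendsto (fun t => (1 + u t) / t ^ p) atTop (nhds A) := by
    have := hinv.add h
    simp only [zero_add] at this
    refine this.congr' ?_
    filter_upwards [eventually_gt_atTop (0:ℝ)] with t ht
    rw [add_div]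
    simp [one_div]
  have h2 : Tendsto (fun t => Real.log ((1 + u t) / t ^ p)) atTop (nhds (Real.log A)) :=
    ((Real.continuousAt_log hA.ne').tendsto).comp h1
  have hev : ∀ᶠ t in atTop, (0:ℝ) < (1 + u t) / t ^ p := h1.eventually (eventually_gt_nhds hA)
  have key : ∀ᶠ t in atTop, Real.log (1 + u t) / Real.log t
      = Real.log ((1 + u t) / t ^ p) / Real.log t + p := by
    filter_upwards [hev, eventually_gt_atTop (1:ℝ)] with t hpos ht1
    have ht0 : (0:ℝ) < t := lt_trans one_pos ht1
    have htp : (0:ℝ) < t ^ p := Real.rpow_pos_of_pos ht0 p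
    have hu : (0:ℝ) < 1 + u t := by
      have := mul_pos hpos htp
      rwa [div_mul_cancel₀] at this
      exact htp.ne'
    have hlt : (0:ℝ) < Real.log t := Real.log_pos ht1
    rw [Real.log_div hu.ne' htp.ne', Real.log_rpow ht0]
    field_simp
    ring
  have hfin : Tendsto (fun t => Real.log ((1 + u t) / t ^ p) / Real.log t + p) atTop
      (nhds (0 + p)) := (h2.div_atTop Real.tendsto_log_atTop).add tendsto_const_nhds
  rw [zero_add] at hfin
  exact hfin.congr' (key.mono fun t ht => ht.symm)

lemma tendsto_one_sub_inv : Tendsto (fun t : ℝ => 1 - 1/t) atTop (nhds 1) := by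
  have := tendsto_const_nhds (x := (1:ℝ)) (f := atTop).sub tendsto_inv_atTop_zero
  simp only [sub_zero] at this
  simpa [one_div] using this

lemma lim_a : Tendsto (fun t : ℝ =>
    Real.log (1 + Real.sqrt t - 1 / Real.sqrt t) / Real.log (1 + t - 1/t))
    atTop (nhds (1/2)) := by
  have hnum : Tendsto (fun t : ℝ => Real.log (1 + (Real.sqrt t - 1/Real.sqrt t)) / Real.log t)
      atTop (nhds (1/2)) := by
    apply log_ratio_tendsto (by norm_num) one_pos
    have : ∀ᶠ t : ℝ in atTop, (Real.sqrt t - 1/Real.sqrt t) / t ^ ((1:ℝ)/2) = 1 - 1/t := by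
      filter_upwards [eventually_gt_atTop (0:ℝ)] with t ht
      have h1 : Real.sqrt t ≠ 0 := ne_of_gt (Real.sqrt_pos.mpr ht)
      have h2 : Real.sqrt t * Real.sqrt t = t := Real.mul_self_sqrt ht.le
      rw [← Real.sqrt_eq_rpow, sub_div, div_self h1, div_div, h2]
    exact tendsto_one_sub_inv.congr' (this.mono fun t ht => ht.symm)
  have hden : Tendsto (fun t : ℝ => Real.log (1 + (t - 1/t)) / Real.log t)
      atTop (nhds 1) := by
    apply log_ratio_tendsto one_pos one_pos
    have : ∀ᶠ t : ℝ in atTop, (t - 1/t) / t ^ ((1:ℝ)) = 1 - 1/t^2 := by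
      filter_upwards [eventually_gt_atTop (0:ℝ)] with t ht
      rw [Real.rpow_one, sub_div, div_self ht.ne', div_div, ← sq]
    have hlim : Tendsto (fun t : ℝ => 1 - 1/t^2) atTop (nhds 1) := by
      have h2 : Tendsto (fun t : ℝ => 1/t^2) atTop (nhds 0) := by
        simp only [one_div]
        exact (tendsto_pow_atTop (two_ne_zero)).inv_tendsto_atTop
      have := (tendsto_const_nhds (x := (1:ℝ)) (f := atTop)).sub h2
      simpa using this
    exact hlim.congr' (this.mono fun t ht => ht.symm)
  have hdiv := hnum.div hden one_ne_zero
  norm_num at hdiv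
  refine hdiv.congr' ?_
  filter_upwards [eventually_gt_atTop (1:ℝ)] with t ht
  have ht0 : (0:ℝ) < t := by linarith
  have hL : (0:ℝ) < Real.log t := Real.log_pos ht
  have hd0 : (0:ℝ) < 1 + (t - 1/t) := by
    have : 1/t < 1 := by rw [div_lt_one ht0]; linarith
    linarith
  have hden0 : (0:ℝ) < Real.log (1 + (t - 1/t)) := Real.log_pos (by linarith [div_pos one_pos ht0, (div_lt_one ht0).mpr (show (1:ℝ) < t from ht)])
  simp only [Pi.div_apply, one_div]
  rw [div_div_div_comm, div_self hL.ne', div_one]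
  rw [show (1:ℝ) + (Real.sqrt t - (Real.sqrt t)⁻¹) = 1 + Real.sqrt t - (Real.sqrt t)⁻¹ by ring,
    show (1:ℝ) + (t - t⁻¹) = 1 + t - t⁻¹ by ring]

lemma lim_b : Tendsto (fun t : ℝ =>
    Real.log (1 + (t / Real.sqrt (t^2+4)) / Real.sqrt (1 - t / Real.sqrt (t^2+4)))
      / Real.log (1 + Real.sqrt t)) atTop (nhds 2) := by
  set R : ℝ → ℝ := fun t => t / Real.sqrt (t^2+4) with hR_def
  have hR : Tendsto R atTop (nhds 1) := by
    have hlim : Tendsto (fun t : ℝ => Real.sqrt (1 - 4/(t^2+4))) atTop (nhds 1) := by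
      have h1 : Tendsto (fun t : ℝ => 4/(t^2+4)) atTop (nhds 0) := by
        apply Tendsto.div_atTop tendsto_const_nhds
        apply tendsto_atTop_add_const_right
        exact tendsto_pow_atTop two_ne_zero
      have h2 := (tendsto_const_nhds (x := (1:ℝ)) (f := atTop)).sub h1
      rw [sub_zero] at h2
      have := (Real.continuous_sqrt.tendsto 1).comp h2
      rwa [Real.sqrt_one] at this
    refine hlim.congr' ?_
    filter_upwards [eventually_gt_atTop (0:ℝ)] with t ht
    have h4 : (0:ℝ) < t^2 + 4 := by positivity
    rw [show 1 - 4/(t^2+4) = t^2/(t^2+4) by field_simp; ring, Real.sqrt_div (sq_nonneg t),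
      Real.sqrt_sq ht.le]
  have hnum : Tendsto (fun t : ℝ => Real.log (1 + R t / Real.sqrt (1 - R t)) / Real.log t)
      atTop (nhds 1) := by
    apply log_ratio_tendsto one_pos (show (0:ℝ) < (Real.sqrt 2)⁻¹ by positivity)
    have hA : Tendsto (fun t : ℝ => (Real.sqrt (4 / (1 + R t)))⁻¹) atTop
        (nhds (Real.sqrt 2)⁻¹) := by
      have h1 : Tendsto (fun t : ℝ => 1 + R t) atTop (nhds 2) := by
        have := (tendsto_const_nhds (x := (1:ℝ)) (f := atTop)).add hR
        norm_num at this; exact this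
      have h2 : Tendsto (fun t : ℝ => 4 / (1 + R t)) atTop (nhds 2) := by
        have := (tendsto_const_nhds (x := (4:ℝ)) (f := atTop)).div h1 two_ne_zero
        norm_num at this; exact this
      have h3 := (Real.continuous_sqrt.tendsto 2).comp h2
      exact h3.inv₀ (by positivity)
    refine hA.congr' ?_
    filter_upwards [eventually_gt_atTop (0:ℝ)] with t ht
    have h4 : (0:ℝ) < t^2 + 4 := by positivity
    set g := Real.sqrt (t^2+4) with hg_def
    have hg0 : 0 < g := Real.sqrt_pos.mpr h4
    have hg2 : g^2 = t^2 + 4 := Real.sq_sqrt h4.le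
    have hgt : t < g := by nlinarith
    have hgtne : g - t ≠ 0 := by linarith
    have hsg : Real.sqrt g ≠ 0 := ne_of_gt (Real.sqrt_pos.mpr hg0)
    have hsgt : Real.sqrt (g - t) ≠ 0 := ne_of_gt (Real.sqrt_pos.mpr (by linarith))
    have hgt0 : (0:ℝ) < g + t := by linarith
    have h5 : (g - t) * (g + t) = 4 := by nlinarith [hg2]
    have hX : 4 / (1 + R t) = g * (g - t) := by
      have hRt : R t = t / g := rfl
      rw [hRt, show (1 : ℝ) + t/g = (g+t)/g by field_simp, div_div_eq_mul_div,
        div_eq_iff hgt0.ne']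
      linear_combination (-g) * h5
    have h1R : 1 - R t = (g - t)/g := by
      have hRt : R t = t / g := rfl
      rw [hRt]; field_simp
    rw [Real.rpow_one, hX, h1R, Real.sqrt_div (by linarith : (0:ℝ) ≤ g - t),
      Real.sqrt_mul hg0.le]
    have hRt : R t = t / g := rfl
    rw [hRt]
    field_simp
    linear_combination (-1 : ℝ) * (Real.mul_self_sqrt hg0.le)
  have hden : Tendsto (fun t : ℝ => Real.log (1 + Real.sqrt t) / Real.log t)
      atTop (nhds (1/2)) := by
    apply log_ratio_tendsto (by norm_num) one_pos
    have : ∀ᶠ t : ℝ in atTop, Real.sqrt t / t ^ ((1:ℝ)/2) = 1 := by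
      filter_upwards [eventually_gt_atTop (0:ℝ)] with t ht
      rw [← Real.sqrt_eq_rpow, div_self (ne_of_gt (Real.sqrt_pos.mpr ht))]
    exact tendsto_const_nhds.congr' (this.mono fun t ht => ht.symm)
  have hdiv := hnum.div hden (by norm_num)
  norm_num at hdiv
  refine hdiv.congr' ?_
  filter_upwards [eventually_gt_atTop (1:ℝ)] with t ht
  have hL : (0:ℝ) < Real.log t := Real.log_pos ht
  simp only [Pi.div_apply]
  rw [div_div_div_comm, div_self hL.ne', div_one]

variable {n : ℕ}

lemma coord_le_norm (v : EuclideanSpace ℝ (Fin n)) (i : Fin n) : |v i| ≤ ‖v‖ := by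
  rw [EuclideanSpace.norm_eq, ← Real.sqrt_sq_eq_abs]
  apply Real.sqrt_le_sqrt
  have := Finset.single_le_sum (f := fun j => v j ^ 2) (fun j _ => sq_nonneg _) (Finset.mem_univ i)
  simpa using this

lemma frontier_halfspace' (i : Fin n) :
    frontier {z : EuclideanSpace ℝ (Fin n) | z i > 0} = {z | z i = 0} := by
  have hcont : Continuous fun z : EuclideanSpace ℝ (Fin n) => z i :=
    (EuclideanSpace.proj (𝕜 := ℝ) i).continuous
  have hopen : IsOpen {z : EuclideanSpace ℝ (Fin n) | z i > 0} := isOpen_lt continuous_const hcont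
  have hclosure : closure {z : EuclideanSpace ℝ (Fin n) | z i > 0} = {z | 0 ≤ z i} := by
    apply Set.Subset.antisymm
    · exact closure_minimal (fun z hz => le_of_lt (show (0:ℝ) < z i from hz))
        (isClosed_le continuous_const hcont)
    · intro z hz
      have htd : Filter.Tendsto (fun ε : ℝ => z + ε • EuclideanSpace.single i (1:ℝ))
          (nhdsWithin 0 (Set.Ioi 0)) (nhds z) := by
        have hc : Continuous (fun ε : ℝ => z + ε • EuclideanSpace.single i (1:ℝ)) := by
          continuity
        have := (hc.tendsto 0).mono_left (nhdsWithin_le_nhds (s := Set.Ioi (0:ℝ)))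
        simpa using this
      refine mem_closure_of_tendsto htd ?_
      filter_upwards [self_mem_nhdsWithin] with ε hε
      have h1 : (z + ε • EuclideanSpace.single i (1:ℝ)) i = z i + ε := by simp
      simp only [Set.mem_setOf_eq, h1]
      have h0 : (0:ℝ) < ε := hε
      have hz' : (0:ℝ) ≤ z i := hz
      linarith
  rw [frontier, hclosure, hopen.interior_eq]
  ext z
  simp only [Set.mem_diff, Set.mem_setOf_eq, not_lt]
  constructor
  · rintro ⟨h1, h2⟩; linarith
  · rintro h; exact ⟨le_of_eq h.symm, le_of_eq h⟩

lemma norm_two_single {i j : Fin n} (hij : j ≠ i) (a b : ℝ) :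
    ‖a • EuclideanSpace.single j (1:ℝ) + b • EuclideanSpace.single i (1:ℝ)‖
      = Real.sqrt (a ^ 2 + b ^ 2) := by
  have horth : (inner ℝ (a • EuclideanSpace.single j (1:ℝ))
      (b • EuclideanSpace.single i (1:ℝ)) : ℝ) = 0 := by
    rw [real_inner_smul_left, real_inner_smul_right, EuclideanSpace.inner_single_left]
    simp [EuclideanSpace.single_apply, hij]
  have h2 : ‖a • EuclideanSpace.single j (1:ℝ) + b • EuclideanSpace.single i (1:ℝ)‖ ^ 2
      = a ^ 2 + b ^ 2 := by
    rw [norm_add_sq_real, horth]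
    rw [norm_smul, norm_smul, EuclideanSpace.norm_single]
    simp [mul_pow, sq_abs]
  rw [← h2, Real.sqrt_sq (norm_nonneg _)]

lemma scTau_halfspace_axis (i : Fin n) {t : ℝ} (ht : 1 < t) :
    scTau {z : EuclideanSpace ℝ (Fin n) | z i > 0}
      (t • EuclideanSpace.single i (1:ℝ)) ((1/t) • EuclideanSpace.single i (1:ℝ))
      = Real.log (1 + (t - 1/t)) := by
  have ht0 : (0:ℝ) < t := by linarith
  set e := EuclideanSpace.single i (1:ℝ) with he_def
  have he : ‖e‖ = 1 := by simp [he_def]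
  have hxy : ‖t • e - (1/t) • e‖ = t - 1/t := by
    rw [← sub_smul, norm_smul, he, mul_one, Real.norm_eq_abs, abs_of_pos]
    have h1 : 1/t < 1 := by rw [div_lt_one ht0]; linarith
    linarith
  rw [scTau]
  congr 2
  refine real_iSup_eq _ _ ?_ ?_
  · rintro ⟨p, hp⟩
    rw [frontier_halfspace'] at hp
    have hpi : (p : EuclideanSpace ℝ (Fin n)) i = 0 := hp
    have hx : t ≤ ‖t • e - (p : EuclideanSpace ℝ (Fin n))‖ := by
      have := coord_le_norm (t • e - (p : EuclideanSpace ℝ (Fin n))) i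
      have hco : (t • e - (p : EuclideanSpace ℝ (Fin n))) i = t := by
        simp [he_def, hpi]
      rw [hco, abs_of_pos ht0] at this
      exact this
    have hy : 1/t ≤ ‖(1/t) • e - (p : EuclideanSpace ℝ (Fin n))‖ := by
      have := coord_le_norm ((1/t) • e - (p : EuclideanSpace ℝ (Fin n))) i
      have hco : ((1/t) • e - (p : EuclideanSpace ℝ (Fin n))) i = 1/t := by
        simp [he_def, hpi]
      rw [hco, abs_of_pos (by positivity)] at this
      exact this
    have hprod : 1 ≤ ‖t • e - (p : EuclideanSpace ℝ (Fin n))‖ * ‖(1/t) • e - (p : EuclideanSpace ℝ (Fin n))‖ := by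
      calc (1:ℝ) = t * (1/t) := by field_simp
      _ ≤ _ := by
          apply mul_le_mul hx hy (by positivity) (le_trans ht0.le hx)
    rw [hxy]
    have hs1 : (1:ℝ) ≤ Real.sqrt (‖t • e - (p : EuclideanSpace ℝ (Fin n))‖ * ‖(1/t) • e - (p : EuclideanSpace ℝ (Fin n))‖) := by
      have := Real.sqrt_le_sqrt hprod
      rwa [Real.sqrt_one] at this
    apply div_le_self
    · have h1 : 1/t < 1 := by rw [div_lt_one ht0]; linarith
      linarith
    · exact hs1
  · have hmem : (0 : EuclideanSpace ℝ (Fin n)) ∈ frontier {z : EuclideanSpace ℝ (Fin n) | z i > 0} := by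
      rw [frontier_halfspace']; simp
    refine ⟨⟨0, hmem⟩, ?_⟩
    have h1 : ‖t • e - (0 : EuclideanSpace ℝ (Fin n))‖ = t := by
      rw [sub_zero, norm_smul, he, mul_one, Real.norm_eq_abs, abs_of_pos ht0]
    have h2 : ‖(1/t) • e - (0 : EuclideanSpace ℝ (Fin n))‖ = 1/t := by
      rw [sub_zero, norm_smul, he, mul_one, Real.norm_eq_abs, abs_of_pos (by positivity)]
    simp only [hxy, h1, h2]
    rw [show t * (1/t) = 1 by field_simp, Real.sqrt_one, div_one]

lemma scTau_halfspace_horiz {i j : Fin n} (hij : j ≠ i) {t : ℝ} (ht : 2 < t) :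
    scTau {z : EuclideanSpace ℝ (Fin n) | z i > 0}
      (t • EuclideanSpace.single j (1:ℝ) + EuclideanSpace.single i (1:ℝ))
      (EuclideanSpace.single i (1:ℝ))
      = Real.log (1 + Real.sqrt t) := by
  have ht0 : (0:ℝ) < t := by linarith
  set e := EuclideanSpace.single i (1:ℝ) with he_def
  set e1 := EuclideanSpace.single j (1:ℝ) with he1_def
  set x := t • e1 + e with hx_def
  have hxy : ‖x - e‖ = t := by
    rw [show x - e = t • e1 by rw [hx_def]; abel, norm_smul, he1_def,
      EuclideanSpace.norm_single, Real.norm_eq_abs]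
    simp [abs_of_pos ht0]
  rw [scTau]
  congr 2
  refine real_iSup_eq _ _ ?_ ?_
  · rintro ⟨p, hp⟩
    rw [frontier_halfspace'] at hp
    have hpi : (p : EuclideanSpace ℝ (Fin n)) i = 0 := hp
    set q : EuclideanSpace ℝ (Fin n) := p
    -- decompose
    set Pu := x - q - e with hPu_def
    set Pv := e - q - e with hPv_def
    have hui : (x - q) i = 1 := by
      simp only [hx_def, he_def, he1_def]
      simp [hpi, EuclideanSpace.single_apply]
      exact fun h => absurd h.symm hij
    have hvi : (e - q) i = 1 := by
      simp [he_def, hpi]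
    have hdecomp : ∀ w : EuclideanSpace ℝ (Fin n), w i = 1 →
        ‖w‖ ^ 2 = ‖w - e‖ ^ 2 + 1 := by
      intro w hw
      have hw_eq : w = (w - e) + e := by abel
      have horth : (inner ℝ (w - e) e : ℝ) = 0 := by
        rw [he_def, EuclideanSpace.inner_single_right]
        simp [hw, he_def]
      calc ‖w‖ ^ 2 = ‖(w - e) + e‖ ^ 2 := by rw [← hw_eq]
      _ = ‖w - e‖ ^ 2 + 2 * (inner ℝ (w - e) e : ℝ) + ‖e‖ ^ 2 := norm_add_sq_real _ _
      _ = ‖w - e‖ ^ 2 + 1 := by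
          rw [horth, he_def, EuclideanSpace.norm_single]; simp
    have hu2 : ‖x - q‖ ^ 2 = ‖Pu‖ ^ 2 + 1 := hdecomp _ hui
    have hv2 : ‖e - q‖ ^ 2 = ‖Pv‖ ^ 2 + 1 := hdecomp _ hvi
    have hab : t ≤ ‖Pu‖ + ‖Pv‖ := by
      have hdiff : Pu - Pv = t • e1 := by
        rw [hPu_def, hPv_def, hx_def]; abel
      calc t = ‖Pu - Pv‖ := by
            rw [hdiff, norm_smul, he1_def, EuclideanSpace.norm_single]
            simp [abs_of_pos ht0]
      _ ≤ ‖Pu‖ + ‖Pv‖ := norm_sub_le _ _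
    have hprod : t ≤ ‖x - q‖ * ‖e - q‖ := by
      nlinarith [norm_nonneg Pu, norm_nonneg Pv, norm_nonneg (x - q), norm_nonneg (e - q),
        sq_nonneg (‖Pu‖ * ‖Pv‖ - 1), sq_nonneg (‖Pu‖ + ‖Pv‖ - t),
        mul_nonneg (norm_nonneg (x-q)) (norm_nonneg (e-q))]
    rw [hxy]
    have hs : Real.sqrt t ≤ Real.sqrt (‖x - q‖ * ‖e - q‖) := Real.sqrt_le_sqrt hprod
    calc t / Real.sqrt (‖x - q‖ * ‖e - q‖) ≤ t / Real.sqrt t := by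
          gcongr

    _ = Real.sqrt t := Real.div_sqrt
  · -- witness p₀ = s • e1 with s (t - s) = 1
    have hd : (0:ℝ) < t^2 - 4 := by nlinarith
    set s := (t - Real.sqrt (t^2 - 4))/2 with hs_def
    have hsq : (Real.sqrt (t^2-4))^2 = t^2 - 4 := Real.sq_sqrt hd.le
    have hslt : Real.sqrt (t^2-4) < t := by
      nlinarith [Real.sqrt_nonneg (t^2-4)]
    have hs0 : 0 < s := by rw [hs_def]; linarith
    have hkey : s * (t - s) = 1 := by
      rw [hs_def]; field_simp; nlinarith
    have hmem : s • e1 ∈ frontier {z : EuclideanSpace ℝ (Fin n) | z i > 0} := by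
      rw [frontier_halfspace']
      simp [he1_def, EuclideanSpace.single_apply]
      exact fun h => absurd h.symm hij
    refine ⟨⟨s • e1, hmem⟩, ?_⟩
    have h1 : ‖x - s • e1‖ = Real.sqrt ((t-s)^2 + 1) := by
      rw [show x - s • e1 = (t - s) • e1 + (1:ℝ) • e by rw [hx_def, one_smul, sub_smul]; abel]
      rw [he_def, he1_def, norm_two_single hij]
      norm_num
    have h2 : ‖e - s • e1‖ = Real.sqrt (s^2 + 1) := by
      rw [show e - s • e1 = (-s) • e1 + (1:ℝ) • e by rw [one_smul, neg_smul]; abel]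
      rw [he_def, he1_def, norm_two_single hij]
      norm_num
    have hprod : ‖x - s • e1‖ * ‖e - s • e1‖ = t := by
      rw [h1, h2, ← Real.sqrt_mul (by positivity)]
      rw [show ((t-s)^2+1)*(s^2+1) = t^2 by linear_combination (s*(t-s) - 1) * hkey]
      rw [Real.sqrt_sq ht0.le]
    simp only [hxy, hprod]
    exact Real.div_sqrt

variable {F : Type*} [NormedAddCommGroup F] [InnerProductSpace ℝ F]


lemma mob_smul (e : F) (he : ‖e‖ = 1) {a : ℝ} (ha : 0 < a) :
    mob e (a • e) = ((1 - a) / (1 + a)) • e := by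
  have h1 : a • e + e = (a + 1) • e := by rw [add_smul, one_smul]
  have h2 : ‖(a + 1) • e‖ = a + 1 := by
    rw [norm_smul, he, mul_one, Real.norm_eq_abs, abs_of_pos (by linarith)]
  rw [mob, h1, h2, smul_smul]
  have : -e = (-1 : ℝ) • e := by simp
  rw [this, ← add_smul]
  congr 1
  field_simp
  ring

lemma mob_one (e : F) (he : ‖e‖ = 1) : mob e e = 0 := by
  have := mob_smul e he (a := 1) one_pos
  simpa using this

lemma mob_horiz (e u : F) (he : ‖e‖ = 1) (hu : ‖u‖ = 1)
    (horth : (inner ℝ u e : ℝ) = 0) (t : ℝ) :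
    mob e (t • u + e) = (2 * t / (t ^ 2 + 4)) • u + (-(t ^ 2 / (t ^ 2 + 4))) • e := by
  have h1 : (t • u + e) + e = t • u + (2 : ℝ) • e := by
    rw [add_assoc]; congr 1; rw [two_smul]
  have h2 : ‖t • u + (2:ℝ) • e‖ ^ 2 = t ^ 2 + 4 := by
    rw [norm_add_sq_real, real_inner_smul_left, real_inner_smul_right, horth,
      norm_smul, norm_smul, he, hu]
    simp [mul_pow, sq_abs]
    ring
  have hden : t ^ 2 + 4 ≠ 0 := by positivity
  rw [mob, h1, h2, smul_add, smul_smul, smul_smul]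
  have : -e = (-1 : ℝ) • e := by simp
  rw [this]
  rw [add_comm ((-1:ℝ) • e), add_assoc, ← add_smul]
  congr 1
  · field_simp
  · field_simp
    ring_nf

lemma scTau_ball_symm (e : F) (he : ‖e‖ = 1) {s : ℝ} (hs0 : 0 < s) (hs1 : s < 1) :
    scTau (ball (0 : F) 1) (-(s • e)) (s • e)
      = Real.log (1 + 2 * s / Real.sqrt (1 - s ^ 2)) := by
  have hfr : frontier (ball (0 : F) 1) = sphere (0 : F) 1 := frontier_ball 0 one_ne_zero
  have hs2 : (0:ℝ) < 1 - s ^ 2 := by nlinarith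
  rw [scTau]
  congr 2
  refine real_iSup_eq _ _ ?_ ?_
  · rintro ⟨p, hp⟩
    have hp1 : ‖p‖ = 1 := by
      rw [hfr] at hp; simpa using hp
    have hxy : ‖-(s • e) - s • e‖ = 2 * s := by
      rw [show -(s • e) - s • e = -((2*s) • e) by rw [two_mul, add_smul]; abel,
        norm_neg, norm_smul, he, mul_one, Real.norm_eq_abs, abs_of_pos (by linarith)]
    have hprod : 1 - s ^ 2 ≤ ‖-(s • e) - p‖ * ‖s • e - p‖ := by
      have hcs := abs_real_inner_le_norm (-(s • e) - p) (s • e - p)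
      have hip : (inner ℝ (-(s • e) - p) (s • e - p) : ℝ) = -(s^2) + 1 := by
        simp only [inner_sub_left, inner_sub_right, inner_neg_left, real_inner_smul_left,
          real_inner_smul_right, real_inner_self_eq_norm_sq, he, hp1, real_inner_comm p e,
          norm_smul, Real.norm_eq_abs, mul_one, sq_abs]
        ring
      rw [hip] at hcs
      calc 1 - s^2 ≤ |(-(s^2) + 1 : ℝ)| := by rw [abs_of_pos (by nlinarith)]; linarith
      _ ≤ _ := hcs
    rw [hxy]
    gcongr

  · have hemem : e ∈ frontier (ball (0 : F) 1) := by
      rw [hfr]; exact mem_sphere_zero_iff_norm.mpr he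
    refine ⟨⟨e, hemem⟩, ?_⟩
    have h1 : ‖-(s • e) - e‖ = s + 1 := by
      rw [show -(s • e) - e = -((s+1) • e) by rw [add_smul, one_smul]; abel, norm_neg,
        norm_smul, he, mul_one, Real.norm_eq_abs, abs_of_pos (by linarith)]
    have h2 : ‖s • e - e‖ = 1 - s := by
      rw [show s • e - e = (s - 1) • e by rw [sub_smul, one_smul], norm_smul, he, mul_one,
        Real.norm_eq_abs, abs_of_neg (by linarith)]
      ring
    have hxy : ‖-(s • e) - s • e‖ = 2 * s := by
      rw [show -(s • e) - s • e = -((2*s) • e) by rw [two_mul, add_smul]; abel,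
        norm_neg, norm_smul, he, mul_one, Real.norm_eq_abs, abs_of_pos (by linarith)]
    simp only [hxy, h1, h2]
    congr 2
    ring

lemma scTau_ball_zero (w : F) (hw0 : 0 < ‖w‖) (hw1 : ‖w‖ < 1) :
    scTau (ball (0 : F) 1) w 0 = Real.log (1 + ‖w‖ / Real.sqrt (1 - ‖w‖)) := by
  have hfr : frontier (ball (0 : F) 1) = sphere (0 : F) 1 := frontier_ball 0 one_ne_zero
  rw [scTau]
  congr 2
  refine real_iSup_eq _ _ ?_ ?_
  · rintro ⟨p, hp⟩
    have hp1 : ‖p‖ = 1 := by rw [hfr] at hp; simpa using hp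
    have h0p : ‖(0:F) - p‖ = 1 := by rw [zero_sub, norm_neg, hp1]
    have hwp : 1 - ‖w‖ ≤ ‖w - p‖ := by
      have := norm_sub_norm_le p w
      have h2 : ‖p - w‖ = ‖w - p‖ := norm_sub_rev p w
      rw [hp1, h2] at this
      linarith
    simp only [sub_zero, h0p, mul_one]
    gcongr
  · have hmem : ‖w‖⁻¹ • w ∈ frontier (ball (0 : F) 1) := by
      rw [hfr]
      rw [mem_sphere_zero_iff_norm, norm_smul, Real.norm_eq_abs, abs_of_pos (by positivity),
        inv_mul_cancel₀ hw0.ne']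
    refine ⟨⟨_, hmem⟩, ?_⟩
    have h1 : ‖w - ‖w‖⁻¹ • w‖ = 1 - ‖w‖ := by
      rw [show w - ‖w‖⁻¹ • w = (1 - ‖w‖⁻¹) • w by rw [sub_smul, one_smul], norm_smul,
        Real.norm_eq_abs, abs_of_neg (by rw [sub_neg]; exact (one_lt_inv_iff₀ ..).mpr ⟨hw0, hw1⟩)]
      have : ‖w‖ ≠ 0 := hw0.ne'
      field_simp
      ring
    have h2 : ‖(0:F) - ‖w‖⁻¹ • w‖ = 1 := by
      rw [zero_sub, norm_neg, norm_smul, Real.norm_eq_abs, abs_of_pos (by positivity),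
        inv_mul_cancel₀ hw0.ne']
    simp only [sub_zero, h1, h2, mul_one]

lemma mob_eq_neg {n : ℕ} (i : Fin n) {t : ℝ} (ht : 1 < t) :
    mob (EuclideanSpace.single i (1:ℝ)) (t • EuclideanSpace.single i (1:ℝ))
      = -(((t - 1) / (t + 1)) • EuclideanSpace.single i (1:ℝ)) := by
  rw [mob_smul _ (by simp) (by linarith : (0:ℝ) < t)]
  rw [show (1 - t)/(1 + t) = -((t - 1)/(t + 1)) by rw [← neg_div]; congr 1 <;> ring, neg_smul]

lemma mob_eq_pos {n : ℕ} (i : Fin n) {t : ℝ} (ht : 1 < t) :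
    mob (EuclideanSpace.single i (1:ℝ)) ((1/t) • EuclideanSpace.single i (1:ℝ))
      = ((t - 1) / (t + 1)) • EuclideanSpace.single i (1:ℝ) := by
  have ht0 : (0:ℝ) < t := by linarith
  rw [mob_smul _ (by simp) (by positivity : (0:ℝ) < 1/t)]
  congr 1
  rw [div_eq_div_iff (by positivity) (by positivity : (t:ℝ) + 1 ≠ 0)]
  field_simp

lemma part1_ratio {n : ℕ} (i : Fin n) {t : ℝ} (ht : 1 < t) :
    scTau (ball (0 : EuclideanSpace ℝ (Fin n)) 1)
      (mob (EuclideanSpace.single i (1:ℝ)) (t • EuclideanSpace.single i (1:ℝ)))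
      (mob (EuclideanSpace.single i (1:ℝ)) ((1/t) • EuclideanSpace.single i (1:ℝ)))
    / scTau {z : EuclideanSpace ℝ (Fin n) | z i > 0}
      (t • EuclideanSpace.single i (1:ℝ)) ((1/t) • EuclideanSpace.single i (1:ℝ))
    = Real.log (1 + Real.sqrt t - 1 / Real.sqrt t) / Real.log (1 + t - 1/t) := by
  have ht0 : (0:ℝ) < t := by linarith
  have ht1 : (0:ℝ) < t + 1 := by linarith
  have hc0 : 0 < (t - 1)/(t + 1) := div_pos (by linarith) ht1
  have hc1 : (t - 1)/(t + 1) < 1 := by rw [div_lt_one ht1]; linarith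
  rw [mob_eq_neg i ht, mob_eq_pos i ht, scTau_ball_symm _ (by simp) hc0 hc1,
    scTau_halfspace_axis i ht]
  have hst : (0:ℝ) < Real.sqrt t := Real.sqrt_pos.mpr ht0
  have hst2 : Real.sqrt t * Real.sqrt t = t := Real.mul_self_sqrt ht0.le
  have h4 : 1 - ((t - 1)/(t + 1))^2 = 4*t/(t+1)^2 := by
    field_simp
    ring
  have h5 : Real.sqrt (4*t/(t+1)^2) = 2*Real.sqrt t/(t+1) := by
    rw [show 4*t/(t+1)^2 = (2*Real.sqrt t/(t+1))^2 by
      rw [div_pow, mul_pow]; rw [Real.sq_sqrt ht0.le]; ring]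
    exact Real.sqrt_sq (by positivity)
  have hX : 2 * ((t - 1)/(t + 1)) / Real.sqrt (1 - ((t - 1)/(t + 1))^2)
      = Real.sqrt t - 1/Real.sqrt t := by
    rw [h4, h5]
    rw [show Real.sqrt t - 1/Real.sqrt t = (t - 1)/Real.sqrt t by rw [sub_div, Real.div_sqrt]]
    rw [div_eq_div_iff (by positivity) hst.ne']
    field_simp
  rw [hX]
  congr 2 <;> ring

lemma partb_ball {n : ℕ} {i j : Fin n} (hij : j ≠ i) {t : ℝ} (ht : 2 < t) :
    scTau (ball (0 : EuclideanSpace ℝ (Fin n)) 1)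
      (mob (EuclideanSpace.single i (1:ℝ))
        (t • EuclideanSpace.single j (1:ℝ) + EuclideanSpace.single i (1:ℝ)))
      (mob (EuclideanSpace.single i (1:ℝ)) (EuclideanSpace.single i (1:ℝ)))
    = Real.log (1 + (t / Real.sqrt (t^2+4)) / Real.sqrt (1 - t / Real.sqrt (t^2+4))) := by
  have ht0 : (0:ℝ) < t := by linarith
  have h4 : (0:ℝ) < t^2 + 4 := by positivity
  have hg0 : 0 < Real.sqrt (t^2+4) := Real.sqrt_pos.mpr h4
  have horth : (inner ℝ (EuclideanSpace.single j (1:ℝ)) (EuclideanSpace.single i (1:ℝ)) : ℝ) = 0 := by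
    rw [EuclideanSpace.inner_single_left]
    simp [EuclideanSpace.single_apply, hij]
  rw [mob_one _ (by simp), mob_horiz _ _ (by simp) (by simp) horth t]
  have hnorm : ‖(2 * t / (t ^ 2 + 4)) • EuclideanSpace.single j (1:ℝ)
      + (-(t ^ 2 / (t ^ 2 + 4))) • EuclideanSpace.single i (1:ℝ)‖ = t / Real.sqrt (t^2+4) := by
    rw [norm_two_single hij]
    rw [show (2*t/(t^2+4))^2 + (-(t^2/(t^2+4)))^2 = t^2/(t^2+4) by field_simp; ring]
    rw [Real.sqrt_div (sq_nonneg t), Real.sqrt_sq ht0.le]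
  have hw0 : (0:ℝ) < t / Real.sqrt (t^2+4) := by positivity
  have hw1 : t / Real.sqrt (t^2+4) < 1 := by
    rw [div_lt_one hg0]
    exact (Real.lt_sqrt ht0.le).mpr (by linarith)
  rw [scTau_ball_zero _ (by rw [hnorm]; exact hw0) (by rw [hnorm]; exact hw1), hnorm]

end Aux

open Filter Real Metric in
/-- sharpness of the constants 1/2 and 2 for the distortion of the
scale invariant Cassinian metric under the Möbius map of ℍⁿ onto 𝔹ⁿ. -/
theorem stmt19 (n : ℕ) (hn : 2 ≤ n) :
    (∀ t : ℝ, 1 < t →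
      mob (EuclideanSpace.single (⟨n - 1, by omega⟩ : Fin n) (1 : ℝ))
          (t • EuclideanSpace.single (⟨n - 1, by omega⟩ : Fin n) (1 : ℝ))
        = -(((t - 1) / (t + 1)) •
            EuclideanSpace.single (⟨n - 1, by omega⟩ : Fin n) (1 : ℝ)) ∧
      mob (EuclideanSpace.single (⟨n - 1, by omega⟩ : Fin n) (1 : ℝ))
          ((1 / t) • EuclideanSpace.single (⟨n - 1, by omega⟩ : Fin n) (1 : ℝ))
        = ((t - 1) / (t + 1)) •
            EuclideanSpace.single (⟨n - 1, by omega⟩ : Fin n) (1 : ℝ) ∧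
      scTau (Metric.ball (0 : EuclideanSpace ℝ (Fin n)) 1)
          (mob (EuclideanSpace.single (⟨n - 1, by omega⟩ : Fin n) (1 : ℝ))
            (t • EuclideanSpace.single (⟨n - 1, by omega⟩ : Fin n) (1 : ℝ)))
          (mob (EuclideanSpace.single (⟨n - 1, by omega⟩ : Fin n) (1 : ℝ))
            ((1 / t) • EuclideanSpace.single (⟨n - 1, by omega⟩ : Fin n) (1 : ℝ)))
        / scTau {z : EuclideanSpace ℝ (Fin n) | z ⟨n - 1, by omega⟩ > 0}
            (t • EuclideanSpace.single (⟨n - 1, by omega⟩ : Fin n) (1 : ℝ))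
            ((1 / t) • EuclideanSpace.single (⟨n - 1, by omega⟩ : Fin n) (1 : ℝ))
        = Real.log (1 + Real.sqrt t - 1 / Real.sqrt t)
            / Real.log (1 + t - 1 / t)) ∧
    Filter.Tendsto
      (fun t : ℝ =>
        scTau (Metric.ball (0 : EuclideanSpace ℝ (Fin n)) 1)
            (mob (EuclideanSpace.single (⟨n - 1, by omega⟩ : Fin n) (1 : ℝ))
              (t • EuclideanSpace.single (⟨n - 1, by omega⟩ : Fin n) (1 : ℝ)))
            (mob (EuclideanSpace.single (⟨n - 1, by omega⟩ : Fin n) (1 : ℝ))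
              ((1 / t) • EuclideanSpace.single (⟨n - 1, by omega⟩ : Fin n) (1 : ℝ)))
          / scTau {z : EuclideanSpace ℝ (Fin n) | z ⟨n - 1, by omega⟩ > 0}
              (t • EuclideanSpace.single (⟨n - 1, by omega⟩ : Fin n) (1 : ℝ))
              ((1 / t) • EuclideanSpace.single (⟨n - 1, by omega⟩ : Fin n) (1 : ℝ)))
      Filter.atTop (nhds (1 / 2)) ∧
    Filter.Tendsto
      (fun t : ℝ =>
        scTau (Metric.ball (0 : EuclideanSpace ℝ (Fin n)) 1)
            (mob (EuclideanSpace.single (⟨n - 1, by omega⟩ : Fin n) (1 : ℝ))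
              (t • EuclideanSpace.single (⟨0, by omega⟩ : Fin n) (1 : ℝ)
                + EuclideanSpace.single (⟨n - 1, by omega⟩ : Fin n) (1 : ℝ)))
            (mob (EuclideanSpace.single (⟨n - 1, by omega⟩ : Fin n) (1 : ℝ))
              (EuclideanSpace.single (⟨n - 1, by omega⟩ : Fin n) (1 : ℝ)))
          / scTau {z : EuclideanSpace ℝ (Fin n) | z ⟨n - 1, by omega⟩ > 0}
              (t • EuclideanSpace.single (⟨0, by omega⟩ : Fin n) (1 : ℝ)
                + EuclideanSpace.single (⟨n - 1, by omega⟩ : Fin n) (1 : ℝ))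
              (EuclideanSpace.single (⟨n - 1, by omega⟩ : Fin n) (1 : ℝ)))
      Filter.atTop (nhds 2) := by
  have hij : (⟨0, by omega⟩ : Fin n) ≠ (⟨n - 1, by omega⟩ : Fin n) := by
    simp only [Ne, Fin.mk.injEq]
    omega
  refine ⟨fun t ht => ⟨mob_eq_neg _ ht, mob_eq_pos _ ht, part1_ratio _ ht⟩, ?_, ?_⟩
  · refine lim_a.congr' ?_
    filter_upwards [Filter.eventually_gt_atTop (1:ℝ)] with t ht
    exact (part1_ratio _ ht).symm
  · refine lim_b.congr' ?_
    filter_upwards [Filter.eventually_gt_atTop (2:ℝ)] with t ht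
    rw [partb_ball hij ht, scTau_halfspace_horiz hij ht]
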